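/- Let p be a prime with p ≡ 1 (mod 30) and G = A₅ × ℤ/pℤ. Suppose (s₁,…,s₆₀) is a sequence of elements of A₅ × {0} ⊆ G whose partial products e, s₁, s₁s₂, …, s₁⋯s₅₉ enumerate all 60 elements of A₅ × {0} (with s₁⋯s₆₀ = e), and let a ∈ G be an element with nontrivial ℤ/pℤ-component such that a^(p-1) ∈ {1} × ℤ/pℤ. Then the walk in Cay(G; {s₁,…,s₆₀, a}) given by the sequence (s₁, a^(p-1), s₂, a^(-(p-1)), s₃, a^(p-1), s₄, a^(-(p-1)), …, s₅₉, a^(p-1), s₆₀, a^(-(p-1))) — i.e., (s_{2i-1}, a repeated p−1 times, s_{2i}, a⁻¹ repeated p−1 times) for i = 1,…,30 — is a hamiltonian cycle in Cay(G; S) where S = {s₁,…,s₆₀} ∪ {a}. -/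

import Mathlib

/-- Lifting a hamiltonian cycle `(s₁,…,s₆₀)` of `A₅ × {0}` to a hamiltonian cycle
of `A₅ × ℤ/pℤ` as `(s_{2i-1}, a^{p-1}, s_{2i}, a^{-(p-1)})_{i=1}^{30}`. -/
theorem lifted_hamiltonian_cycle (p : ℕ) (hp : p.Prime) (hmod : p % 30 = 1)
    (s : ℕ → alternatingGroup (Fin 5) × Multiplicative (ZMod p))
    (hs : ∀ i < 60, (s i).2 = 1)
    (hinj : Function.Injective
      (fun i : Fin 60 => ((List.range i.val).map s).prod))
    (hsurj : ∀ g : alternatingGroup (Fin 5) × Multiplicative (ZMod p), g.2 = 1 →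
      ∃ i : Fin 60, ((List.range i.val).map s).prod = g)
    (hclosed : ((List.range 60).map s).prod = 1)
    (a : alternatingGroup (Fin 5) × Multiplicative (ZMod p))
    (ha : a.2 ≠ 1) (hap : (a ^ (p - 1)).1 = 1) :
    ((List.range 30).flatMap (fun i =>
        [s (2 * i)] ++ List.replicate (p - 1) a ++
        [s (2 * i + 1)] ++ List.replicate (p - 1) a⁻¹)).length = 60 * p ∧
    Function.Bijective (fun k : Fin (60 * p) =>
      (((List.range 30).flatMap (fun i =>
        [s (2 * i)] ++ List.replicate (p - 1) a ++
        [s (2 * i + 1)] ++ List.replicate (p - 1) a⁻¹)).take k.val).prod) ∧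
    ((List.range 30).flatMap (fun i =>
        [s (2 * i)] ++ List.replicate (p - 1) a ++
        [s (2 * i + 1)] ++ List.replicate (p - 1) a⁻¹)).prod = 1 := by
  haveI := Fact.mk hp
  have hp2 : 2 ≤ p := hp.two_le
  set B : ℕ → List (alternatingGroup (Fin 5) × Multiplicative (ZMod p)) :=
    fun i => [s (2 * i)] ++ List.replicate (p - 1) a ++
        [s (2 * i + 1)] ++ List.replicate (p - 1) a⁻¹ with hB
  set P : ℕ → alternatingGroup (Fin 5) × Multiplicative (ZMod p) :=
    fun m => ((List.range m).map s).prod with hPdef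
  -- basic facts
  have hBlen : ∀ i, (B i).length = 2 * p := by
    intro i; simp [hB]; omega
  have hLlen : ((List.range 30).flatMap B).length = 60 * p := by
    rw [List.length_flatMap]
    have : List.map (List.length ∘ B) (List.range 30) = List.replicate 30 (2 * p) := by
      rw [show (List.length ∘ B) = fun _ => 2 * p from funext fun i => hBlen i]
      simp [List.map_const']
    rw [show (fun a => (B a).length) = List.length ∘ B from rfl, this, List.sum_replicate]; simp; ring
  have hcomm : ∀ g : alternatingGroup (Fin 5) × Multiplicative (ZMod p), g.2 = 1 →
      a ^ (p - 1) * g = g * a ^ (p - 1) := by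
    intro g hg
    refine Prod.ext ?_ ?_
    · simp [Prod.fst_mul, hap]
    · exact mul_comm _ _
  have hPsucc : ∀ m, P (m + 1) = P m * s m := by
    intro m; simp [hPdef, List.range_succ]
  have hP60 : P 60 = 1 := hclosed
  have hPsnd : ∀ m ≤ 60, (P m).2 = 1 := by
    intro m hm
    induction m with
    | zero => simp [hPdef]
    | succ n ih =>
      rw [hPsucc, Prod.snd_mul, ih (by omega), hs n (by omega), one_mul]
  have horder : orderOf a.2 = p := by
    have hcard : Fintype.card (Multiplicative (ZMod p)) = p := by
      rw [Fintype.card_multiplicative, ZMod.card]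
    have h1 : orderOf a.2 ∣ p := by
      have := orderOf_dvd_card (x := a.2); rwa [hcard] at this
    rcases (Nat.Prime.eq_one_or_self_of_dvd hp _ h1) with h | h
    · exact absurd (orderOf_eq_one_iff.mp h) ha
    · exact h
  have hPinj : ∀ m < 60, ∀ m' < 60, P m = P m' → m = m' := by
    intro m hm m' hm' h
    have := hinj (a₁ := ⟨m, hm⟩) (a₂ := ⟨m', hm'⟩) h
    exact Fin.mk.injEq .. ▸ this
  have hBprod : ∀ i < 30, (B i).prod = s (2 * i) * s (2 * i + 1) := by
    intro i hi
    have h2 : a ^ (p - 1) * s (2 * i + 1) = s (2 * i + 1) * a ^ (p - 1) :=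
      hcomm _ (hs _ (by omega))
    simp only [hB, List.prod_append, List.prod_cons, List.prod_nil, mul_one,
      List.prod_replicate, inv_pow]
    rw [mul_assoc (s (2*i)), h2, ← mul_assoc, mul_assoc _ _ (a ^ (p-1))⁻¹,
      mul_inv_cancel, mul_one]
  have hflatProd : ∀ n ≤ 30, ((List.range n).flatMap B).prod = P (2 * n) := by
    intro n hn
    induction n with
    | zero => simp [hPdef]
    | succ n ih =>
      rw [List.range_succ, List.flatMap_append, List.prod_append,
        ih (by omega), List.flatMap_cons, List.flatMap_nil, List.append_nil,
        hBprod n (by omega), show 2 * (n+1) = (2*n + 1) + 1 from by ring,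
        hPsucc, hPsucc, mul_assoc]
  have hLprod : ((List.range 30).flatMap B).prod = 1 := by
    rw [hflatProd 30 le_rfl]; exact hP60
  -- take lemma
  have hflatLen : ∀ q, ((List.range q).flatMap B).length = 2 * p * q := by
    intro q
    rw [List.length_flatMap]
    have : List.map (List.length ∘ B) (List.range q) = List.replicate q (2 * p) := by
      rw [show (List.length ∘ B) = fun _ => 2 * p from funext fun i => hBlen i]
      simp [List.map_const']
    rw [show (fun a => (B a).length) = List.length ∘ B from rfl, this, List.sum_replicate]; simp; ring
  have hTake : ∀ q < 30, ∀ r ≤ 2 * p,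
      (((List.range 30).flatMap B).take (2 * p * q + r)).prod
        = P (2 * q) * ((B q).take r).prod := by
    intro q hq r hr
    rw [show (List.range 30) = List.range q ++ (List.map (fun x => q + x) (List.range (30 - q)))
        from by rw [← List.range_add]; congr 1; omega]
    rw [List.flatMap_append, ← hflatLen q, List.take_length_add_append, List.prod_append,
      hflatProd q hq.le]
    congr 1
    rw [show 30 - q = (30 - q - 1) + 1 from by omega, List.range_succ_eq_map,
      List.map_cons, List.flatMap_cons, Nat.add_zero,
      List.take_append_of_le_length (by rw [hBlen]; exact hr)]
  -- block take formulas
  have hBcons : ∀ i, B i = s (2 * i) :: (List.replicate (p - 1) a ++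
      s (2 * i + 1) :: List.replicate (p - 1) a⁻¹) := by
    intro i; simp [hB]
  have hBtake1 : ∀ i, ∀ r, 1 ≤ r → r ≤ p →
      ((B i).take r).prod = s (2 * i) * a ^ (r - 1) := by
    intro i r h1 h2
    rw [hBcons, show r = (r - 1) + 1 from by omega, List.take_succ_cons,
      List.take_append_of_le_length (by simp; omega), List.take_replicate,
      show (r - 1) ⊓ (p - 1) = r - 1 from by omega]
    rw [List.prod_cons, List.prod_replicate]
    simp
  have hBtake2 : ∀ i < 30, ∀ r, p + 1 ≤ r → r ≤ 2 * p →
      ((B i).take r).prod = s (2 * i) * s (2 * i + 1) * a ^ (2 * p - r) := by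
    intro i hi r h1 h2
    have hBsplit : B i = (s (2 * i) :: (List.replicate (p - 1) a ++ [s (2 * i + 1)]))
        ++ List.replicate (p - 1) a⁻¹ := by
      simp [hB]
    have hlen : (s (2 * i) :: (List.replicate (p - 1) a ++ [s (2 * i + 1)])).length = p + 1 := by
      simp; omega
    have htk : (B i).take r = (s (2 * i) :: (List.replicate (p - 1) a ++ [s (2 * i + 1)]))
        ++ List.replicate (r - p - 1) a⁻¹ := by
      conv_lhs => rw [hBsplit, show r = (s (2 * i) :: (List.replicate (p - 1) a ++ [s (2 * i + 1)])).length
          + (r - p - 1) from by rw [hlen]; omega, List.take_length_add_append, List.take_replicate]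
      rw [show (r - p - 1) ⊓ (p - 1) = r - p - 1 from by omega]
    rw [htk, List.prod_append, List.prod_cons, List.prod_append, List.prod_replicate,
      List.prod_replicate, List.prod_cons, List.prod_nil, mul_one, inv_pow]
    have hc : a ^ (p - 1) * s (2 * i + 1) = s (2 * i + 1) * a ^ (p - 1) :=
      hcomm _ (hs _ (by omega))
    have hpow : a ^ (p - 1) = a ^ (2 * p - r) * a ^ (r - p - 1) := by
      rw [← pow_add]; congr 1; omega
    calc s (2 * i) * (a ^ (p - 1) * s (2 * i + 1)) * (a ^ (r - p - 1))⁻¹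
        = s (2 * i) * (s (2 * i + 1) * a ^ (p - 1)) * (a ^ (r - p - 1))⁻¹ := by rw [hc]
      _ = s (2 * i) * s (2 * i + 1) * (a ^ (p - 1) * (a ^ (r - p - 1))⁻¹) := by
          rw [← mul_assoc, mul_assoc _ _ (a ^ (r - p - 1))⁻¹]
      _ = s (2 * i) * s (2 * i + 1) * a ^ (2 * p - r) := by
          rw [hpow, mul_assoc (a ^ (2 * p - r)), mul_inv_cancel, mul_one]
  -- the key characterization of partial products
  have key : ∀ k : Fin (60 * p), ∃ m t : ℕ, m ≤ 60 ∧ t < p ∧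
      (¬ 2 ∣ m → k.val = p * (m - 1) + t + 1) ∧
      (2 ∣ m → k.val + t = p * m) ∧
      (m = 60 → 1 ≤ t) ∧ (m = 0 → t = 0) ∧
      (((List.range 30).flatMap B).take k.val).prod = P m * a ^ t := by
    intro k
    have hklt : k.val < 60 * p := k.isLt
    set q := k.val / (2 * p) with hqdef
    set r := k.val % (2 * p) with hrdef
    have hk : k.val = 2 * p * q + r := by
      rw [hqdef, hrdef]; exact (Nat.div_add_mod _ _).symm
    have hq : q < 30 := by
      rw [hqdef]
      exact Nat.div_lt_iff_lt_mul (by omega : 0 < 2 * p) |>.mpr (by omega)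
    have hr : r < 2 * p := Nat.mod_lt _ (by omega)
    have hF := hTake q hq r hr.le
    rw [← hk] at hF
    have e1 : 2 * p * q = 2 * (p * q) := by ring
    rcases Nat.lt_or_ge r 1 with h0 | h1
    · -- r = 0
      have e2 : p * (2 * q) = 2 * (p * q) := by ring
      refine ⟨2 * q, 0, by omega, by omega,
        fun h => absurd ⟨q, by ring⟩ h, fun _ => by omega, by omega, fun _ => rfl, ?_⟩
      rw [hF, show r = 0 from by omega, List.take_zero, List.prod_nil, pow_zero, mul_one]
    · rcases Nat.lt_or_ge r (p + 1) with hrp | hrp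
      · -- 1 ≤ r ≤ p
        have e2 : p * (2 * q + 1 - 1) = 2 * (p * q) := by
          rw [Nat.add_sub_cancel]; ring
        refine ⟨2 * q + 1, r - 1, by omega, by omega, fun _ => by omega,
          fun h => by omega, by omega, by omega, ?_⟩
        rw [hF, hBtake1 q r h1 (by omega), hPsucc, mul_assoc]
      · -- p + 1 ≤ r < 2 * p
        have e2 : p * (2 * q + 2) = 2 * (p * q) + 2 * p := by ring
        refine ⟨2 * q + 2, 2 * p - r, by omega, by omega,
          fun h => absurd ⟨q + 1, by ring⟩ h, fun _ => by omega, by omega, by omega, ?_⟩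
        rw [hF, hBtake2 q hq r hrp hr.le,
          show 2 * q + 2 = (2 * q + 1) + 1 from by ring, hPsucc, hPsucc,
          mul_assoc, mul_assoc, mul_assoc]
  -- injectivity
  have hFinj : Function.Injective (fun k : Fin (60 * p) =>
      (((List.range 30).flatMap B).take k.val).prod) := by
    intro k k' heq
    obtain ⟨m, t, hm, ht, hodd, heven, h60, h0, hFk⟩ := key k
    obtain ⟨m', t', hm', ht', hodd', heven', h60', h0', hFk'⟩ := key k'
    simp only at heq
    rw [hFk, hFk'] at heq
    have hsnd : a.2 ^ t = a.2 ^ t' := by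
      have := congrArg Prod.snd heq
      simpa [Prod.snd_mul, Prod.pow_snd, hPsnd m hm, hPsnd m' hm'] using this
    have htt : t = t' := by
      have h1 : t % orderOf a.2 = t' % orderOf a.2 := pow_eq_pow_iff_modEq.mp hsnd
      rw [horder] at h1
      have h2 : t % p = t' % p := h1
      rwa [Nat.mod_eq_of_lt ht, Nat.mod_eq_of_lt ht'] at h2
    subst htt
    have hPmm : P m = P m' := mul_right_cancel heq
    -- now show m = m'
    have hmm : m = m' := by
      rcases Nat.lt_or_ge m 60 with hlt | hge
      · rcases Nat.lt_or_ge m' 60 with hlt' | hge'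
        · exact hPinj m hlt m' hlt' hPmm
        · -- m' = 60
          have hm'60 : m' = 60 := by omega
          have : P m = P 0 := by rw [hPmm, hm'60, hP60]; rfl
          have hm0 : m = 0 := hPinj m hlt 0 (by omega) this
          have := h60' hm'60
          have := h0 hm0
          omega
      · rcases Nat.lt_or_ge m' 60 with hlt' | hge'
        · have hm60 : m = 60 := by omega
          have : P m' = P 0 := by rw [← hPmm, hm60, hP60]; rfl
          have hm0 : m' = 0 := hPinj m' hlt' 0 (by omega) this
          have := h60 hm60
          have := h0' hm0
          omega
        · omega
    subst hmm
    apply Fin.ext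
    rcases Nat.even_or_odd m with he | ho
    · have := heven he.two_dvd
      have := heven' he.two_dvd
      omega
    · have hnd : ¬ 2 ∣ m := by
        obtain ⟨c, hc⟩ := ho
        omega
      have ha1 := hodd hnd
      have ha2 := hodd' hnd
      omega
  -- cardinality
  have hcard5 : Fintype.card ↥(alternatingGroup (Fin 5)) = 60 := by
    have h := two_mul_card_alternatingGroup (α := Fin 5)
    rw [Fintype.card_perm, Fintype.card_fin,
      show Nat.factorial 5 = 120 from rfl] at h
    omega
  refine ⟨hLlen, ?_, hLprod⟩
  rw [Fintype.bijective_iff_injective_and_card]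
  refine ⟨hFinj, ?_⟩
  rw [Fintype.card_fin, Fintype.card_prod, Fintype.card_multiplicative, ZMod.card, hcard5]
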